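/- Suppose the exploration policy μ and the propensity estimator μ̂ are stationary, and the target policy ν is deterministic (ν(·|x) puts all mass on one action). Then Var_μ[V̂_DR] = (1/n)·( Var_{(x,a)∼ν}[ r*(x,a) + (1−ρ(x,a))Δ(x,a) ] + E_{(x,a)∼ν}[ (1/μ̂(a|x))·ρ(x,a)·Var_{r∼D(·|x,a)}[r] ] + E_{(x,a)∼ν}[ ((1−μ(a|x))/μ̂(a|x))·ρ(x,a)·Δ(x,a)² ] ). -/

import Mathlib

open Finset

section aux

variable {S : Type*} [Fintype S]

lemma sum_pi_prod {n : ℕ} (q : Fin n → S → ℝ) :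
    ∑ z : Fin n → S, ∏ k, q k (z k) = ∏ k, ∑ s, q k s := by
  rw [Finset.prod_univ_sum, Fintype.piFinset_univ]

lemma exp_single (p f : S → ℝ) (hp : ∑ s, p s = 1) {n : ℕ} (c : Fin n) :
    ∑ z : Fin n → S, (∏ k, p (z k)) * f (z c) = ∑ s, p s * f s := by
  have h1 : ∀ z : Fin n → S, (∏ k, p (z k)) * f (z c)
      = ∏ k, (p (z k) * if k = c then f (z k) else 1) := by
    intro z
    rw [Finset.prod_mul_distrib, Finset.prod_ite_eq' univ c (fun k => f (z k))]
    simp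
  simp_rw [h1]
  rw [sum_pi_prod (fun k s => p s * if k = c then f s else 1)]
  have h2 : ∀ k : Fin n, (∑ s, p s * if k = c then f s else 1)
      = if k = c then ∑ s, p s * f s else 1 := by
    intro k; split <;> simp [hp]
  simp_rw [h2]
  rw [Finset.prod_ite_eq' univ c]
  simp

lemma exp_pair (p f : S → ℝ) (hp : ∑ s, p s = 1) {n : ℕ} (c d : Fin n) :
    ∑ z : Fin n → S, (∏ k, p (z k)) * (f (z c) * f (z d)) =
      if c = d then ∑ s, p s * (f s)^2 else (∑ s, p s * f s)^2 := by
  by_cases hcd : c = d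
  · subst hcd
    rw [if_pos rfl]
    have h := exp_single p (fun s => f s * f s) hp c
    simp only [sq]
    exact h
  · rw [if_neg hcd]
    have h1 : ∀ z : Fin n → S, (∏ k, p (z k)) * (f (z c) * f (z d))
        = ∏ k, (p (z k) * ((if k = c then f (z k) else 1) * (if k = d then f (z k) else 1))) := by
      intro z
      simp only [Finset.prod_mul_distrib, Finset.prod_ite_eq' univ, mem_univ, if_pos]
    simp_rw [h1]
    rw [sum_pi_prod (fun k s => p s * ((if k = c then f s else 1) * (if k = d then f s else 1)))]
    have h2 : ∀ k : Fin n, (∑ s, p s * ((if k = c then f s else 1) * (if k = d then f s else 1)))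
        = (if k = c then ∑ s, p s * f s else 1) * (if k = d then ∑ s, p s * f s else 1) := by
      intro k
      rcases eq_or_ne k c with rfl | hc
      · simp [hcd]
      · rcases eq_or_ne k d with rfl | hd
        · simp [hc]
        · simp [hc, hd, hp]
    simp_rw [h2]
    rw [Finset.prod_mul_distrib, Finset.prod_ite_eq' univ c, Finset.prod_ite_eq' univ d]
    simp [sq]

lemma moments (p f : S → ℝ) (hp : ∑ s, p s = 1) {n : ℕ} (hn : 0 < n) :
    (∑ z : Fin n → S, (∏ k, p (z k)) * ((n : ℝ)⁻¹ * ∑ k, f (z k))^2)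
      - (∑ z : Fin n → S, (∏ k, p (z k)) * ((n : ℝ)⁻¹ * ∑ k, f (z k)))^2
    = (n : ℝ)⁻¹ * ((∑ s, p s * (f s)^2) - (∑ s, p s * f s)^2) := by
  set μ1 := ∑ s, p s * f s with hμ1
  set μ2 := ∑ s, p s * (f s)^2 with hμ2
  have hnR : (n : ℝ) ≠ 0 := Nat.cast_ne_zero.mpr hn.ne'
  have hE1 : ∑ z : Fin n → S, (∏ k, p (z k)) * (∑ k, f (z k)) = n * μ1 := by
    have h : ∀ z : Fin n → S, (∏ k, p (z k)) * (∑ k, f (z k))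
        = ∑ k, (∏ j, p (z j)) * f (z k) := fun z => Finset.mul_sum _ _ _
    simp_rw [h]
    rw [Finset.sum_comm]
    simp_rw [exp_single p f hp]
    simp [mul_comm]
    exact Or.inl hμ1.symm
  have hE2 : ∑ z : Fin n → S, (∏ k, p (z k)) * (∑ k, f (z k))^2
      = n * μ2 + ((n:ℝ)^2 - n) * μ1^2 := by
    have step : ∀ z : Fin n → S, (∏ k, p (z k)) * (∑ k, f (z k))^2
        = ∑ kl : Fin n × Fin n, (∏ j, p (z j)) * (f (z kl.1) * f (z kl.2)) := by
      intro z
      rw [Fintype.sum_prod_type, sq, Finset.sum_mul_sum, Finset.mul_sum]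
      simp_rw [Finset.mul_sum]
    simp_rw [step]
    rw [Finset.sum_comm]
    simp_rw [exp_pair p f hp]
    rw [Fintype.sum_prod_type]
    have inner : ∀ k : Fin n, (∑ l : Fin n, if k = l then μ2 else μ1^2)
        = μ2 + ((n:ℝ) - 1) * μ1^2 := by
      intro k
      have h : ∀ l : Fin n, (if k = l then μ2 else μ1^2)
          = μ1^2 + (if k = l then μ2 - μ1^2 else 0) := by
        intro l; split <;> ring
      simp_rw [h]
      rw [Finset.sum_add_distrib, Finset.sum_const, Finset.sum_ite_eq]
      simp
      ring
    change ∑ x : Fin n, ∑ y : Fin n, (if x = y then μ2 else μ1^2) = _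
    simp_rw [inner]
    rw [Finset.sum_const]
    simp
    ring
  -- first moment of the mean
  have hA : ∑ z : Fin n → S, (∏ k, p (z k)) * ((n : ℝ)⁻¹ * ∑ k, f (z k)) = μ1 := by
    have h : ∀ z : Fin n → S, (∏ k, p (z k)) * ((n : ℝ)⁻¹ * ∑ k, f (z k))
        = (n : ℝ)⁻¹ * ((∏ k, p (z k)) * (∑ k, f (z k))) := by intro z; ring
    simp_rw [h]
    rw [← Finset.mul_sum, hE1]
    field_simp
  have hB : ∑ z : Fin n → S, (∏ k, p (z k)) * ((n : ℝ)⁻¹ * ∑ k, f (z k))^2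
      = ((n:ℝ)⁻¹)^2 * (n * μ2 + ((n:ℝ)^2 - n) * μ1^2) := by
    have h : ∀ z : Fin n → S, (∏ k, p (z k)) * ((n : ℝ)⁻¹ * ∑ k, f (z k))^2
        = ((n:ℝ)⁻¹)^2 * ((∏ k, p (z k)) * (∑ k, f (z k))^2) := by intro z; ring
    simp_rw [h]
    rw [← Finset.mul_sum, hE2]
  rw [hA, hB]
  field_simp
  ring

end aux
theorem stmt5 {X A R : Type*} [Fintype X] [Fintype A] [Fintype R] [DecidableEq A]
    (n : ℕ) (hn : 0 < n)
    (D : X → ℝ) (pol : X → A) (mu muhat : X → A → ℝ)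
    (Dr : X → A → R → ℝ) (rval : R → ℝ) (rhat : X → A → ℝ)
    (hD0 : ∀ x, 0 ≤ D x) (hD1 : ∑ x, D x = 1)
    (hmu0 : ∀ x a, 0 ≤ mu x a) (hmu1 : ∀ x, ∑ a, mu x a = 1)
    (hDr0 : ∀ x a r, 0 ≤ Dr x a r) (hDr1 : ∀ x a, ∑ r, Dr x a r = 1)
    (hrval0 : ∀ r, 0 ≤ rval r) (hrval1 : ∀ r, rval r ≤ 1)
    (hrhat0 : ∀ x a, 0 ≤ rhat x a) (hrhat1 : ∀ x a, rhat x a ≤ 1)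
    (hmuhat : ∀ x a, 0 < muhat x a)
    (hpos : ∀ x, 0 < mu x (pol x))
    (rstar : X → A → ℝ) (hrstar : ∀ x a, rstar x a = ∑ r, Dr x a r * rval r)
    (Δ : X → A → ℝ) (hΔ : ∀ x a, Δ x a = rhat x a - rstar x a)
    (ρ : X → A → ℝ) (hρ : ∀ x a, ρ x a = mu x a / muhat x a)
    (varr : X → A → ℝ)
    (hvarr : ∀ x a, varr x a = (∑ r, Dr x a r * (rval r)^2) - (rstar x a)^2)
    (Vhat : X → A → R → ℝ)
    (hVhat : ∀ x a r, Vhat x a r =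
      rhat x (pol x) + ((if a = pol x then (1:ℝ) else 0) / muhat x a) * (rval r - rhat x a))
    (P : (Fin n → X × A × R) → ℝ)
    (hP : ∀ z, P z = ∏ k, D (z k).1 * (mu (z k).1 (z k).2.1 * Dr (z k).1 (z k).2.1 (z k).2.2))
    (g : X → ℝ)
    (hg : ∀ x, g x = rstar x (pol x) + (1 - ρ x (pol x)) * Δ x (pol x)) :
    (∑ z : Fin n → X × A × R, P z *
        ((n : ℝ)⁻¹ * ∑ k, Vhat (z k).1 (z k).2.1 (z k).2.2)^2)
      - (∑ z : Fin n → X × A × R, P z *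
          ((n : ℝ)⁻¹ * ∑ k, Vhat (z k).1 (z k).2.1 (z k).2.2))^2
    = (n : ℝ)⁻¹ * (
        ((∑ x, D x * (g x)^2) - (∑ x, D x * g x)^2)
        + (∑ x, D x * ((muhat x (pol x))⁻¹ * (ρ x (pol x) * varr x (pol x))))
        + (∑ x, D x * (((1 - mu x (pol x)) / muhat x (pol x)) *
              (ρ x (pol x) * (Δ x (pol x))^2)))) := by
  classical
  set p : X × A × R → ℝ := fun s => D s.1 * (mu s.1 s.2.1 * Dr s.1 s.2.1 s.2.2) with hpdef
  set f : X × A × R → ℝ := fun s => Vhat s.1 s.2.1 s.2.2 with hfdef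
  -- p is a probability
  have hp : ∑ s : X × A × R, p s = 1 := by
    rw [Fintype.sum_prod_type]
    have hx : ∀ x : X, ∑ y : A × R, p (x, y) = D x := by
      intro x
      rw [Fintype.sum_prod_type]
      simp only [hpdef]
      simp_rw [← Finset.mul_sum, hDr1, mul_one, hmu1, mul_one]
    simp_rw [hx]
    exact hD1
  -- inner sums over r
  have hVsum : ∀ x a, ∑ r, Dr x a r * Vhat x a r
      = rhat x (pol x) + ((if a = pol x then (1:ℝ) else 0) / muhat x a) * (rstar x a - rhat x a) := by
    intro x a
    have expand : ∀ r, Dr x a r * Vhat x a r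
        = rhat x (pol x) * Dr x a r
          + ((if a = pol x then (1:ℝ) else 0) / muhat x a) * (Dr x a r * rval r)
          - ((if a = pol x then (1:ℝ) else 0) / muhat x a) * (Dr x a r * rhat x a) := by
      intro r; rw [hVhat]; ring
    simp_rw [expand]
    rw [Finset.sum_sub_distrib, Finset.sum_add_distrib, ← Finset.mul_sum, ← Finset.mul_sum,
      ← Finset.mul_sum, hDr1]
    rw [hrstar]
    have : ∑ r, Dr x a r * rhat x a = rhat x a := by
      rw [← Finset.sum_mul, hDr1, one_mul]
    rw [this]
    ring
  have hV2sum : ∀ x a, ∑ r, Dr x a r * (Vhat x a r)^2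
      = (rhat x (pol x))^2
        + 2 * rhat x (pol x) * ((if a = pol x then (1:ℝ) else 0) / muhat x a) * (rstar x a - rhat x a)
        + ((if a = pol x then (1:ℝ) else 0) / muhat x a)^2 *
            ((∑ r, Dr x a r * (rval r)^2) - 2 * rhat x a * rstar x a + (rhat x a)^2) := by
    intro x a
    set c := rhat x (pol x)
    set k := (if a = pol x then (1:ℝ) else 0) / muhat x a
    have expand : ∀ r, Dr x a r * (Vhat x a r)^2
        = (c^2 - 2 * c * k * rhat x a + k^2 * (rhat x a)^2) * Dr x a r
          + (2 * c * k - 2 * k^2 * rhat x a) * (Dr x a r * rval r)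
          + k^2 * (Dr x a r * (rval r)^2) := by
      intro r; rw [hVhat]; ring
    simp_rw [expand]
    rw [Finset.sum_add_distrib, Finset.sum_add_distrib]
    simp_rw [← Finset.mul_sum]
    rw [hDr1, hrstar]
    ring
  -- first moment per x
  have hg' : ∀ x, g x = rhat x (pol x)
      + (mu x (pol x) / muhat x (pol x)) * (rstar x (pol x) - rhat x (pol x)) := by
    intro x
    rw [hg, hρ, hΔ]
    ring
  have hmuh : ∀ x a, muhat x a ≠ 0 := fun x a => (hmuhat x a).ne'
  have hμ1 : ∑ s : X × A × R, p s * f s = ∑ x, D x * g x := by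
    rw [Fintype.sum_prod_type]
    refine Finset.sum_congr rfl fun x _ => ?_
    rw [Fintype.sum_prod_type]
    simp only [hpdef, hfdef]
    simp_rw [mul_assoc, ← Finset.mul_sum]
    congr 1
    simp_rw [hVsum]
    have split : ∀ a : A, mu x a * (rhat x (pol x)
          + ((if a = pol x then (1:ℝ) else 0) / muhat x a) * (rstar x a - rhat x a))
        = mu x a * rhat x (pol x)
          + (if a = pol x then mu x a / muhat x a * (rstar x a - rhat x a) else 0) := by
      intro a
      by_cases h : a = pol x <;> simp [h] <;> ring
    simp_rw [split]
    rw [Finset.sum_add_distrib, ← Finset.sum_mul, hmu1, one_mul]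
    rw [Finset.sum_ite_eq' univ (pol x)]
    simp [hg' x]
  -- second moment per x
  have hμ2 : ∑ s : X × A × R, p s * (f s)^2
      = ∑ x, D x * ((g x)^2
          + (muhat x (pol x))⁻¹ * (ρ x (pol x) * varr x (pol x))
          + ((1 - mu x (pol x)) / muhat x (pol x)) * (ρ x (pol x) * (Δ x (pol x))^2)) := by
    rw [Fintype.sum_prod_type]
    refine Finset.sum_congr rfl fun x _ => ?_
    rw [Fintype.sum_prod_type]
    simp only [hpdef, hfdef]
    simp_rw [mul_assoc, ← Finset.mul_sum]
    congr 1
    simp_rw [hV2sum]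
    have split : ∀ a : A, mu x a * ((rhat x (pol x))^2
          + 2 * rhat x (pol x) * ((if a = pol x then (1:ℝ) else 0) / muhat x a) * (rstar x a - rhat x a)
          + ((if a = pol x then (1:ℝ) else 0) / muhat x a)^2 *
              ((∑ r, Dr x a r * (rval r)^2) - 2 * rhat x a * rstar x a + (rhat x a)^2))
        = mu x a * (rhat x (pol x))^2
          + (if a = pol x then
              mu x (pol x) * (2 * rhat x (pol x) * (rstar x (pol x) - rhat x (pol x)) / muhat x (pol x)
                + ((∑ r, Dr x (pol x) r * (rval r)^2) - 2 * rhat x (pol x) * rstar x (pol x)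
                    + (rhat x (pol x))^2) / (muhat x (pol x))^2)
            else 0) := by
      intro a
      by_cases ha : a = pol x
      · subst ha
        rw [if_pos rfl, if_pos rfl]
        have hne' : muhat x (pol x) ≠ 0 := hmuh x (pol x)
        field_simp
        ring
      · simp [ha]
    simp_rw [split]
    rw [Finset.sum_add_distrib, ← Finset.sum_mul, hmu1, one_mul,
      Finset.sum_ite_eq' univ (pol x)]
    simp only [mem_univ, if_pos]
    rw [hg' x, hρ, hΔ, hvarr]
    have hne : muhat x (pol x) ≠ 0 := hmuh x (pol x)
    field_simp
    ring
  -- assemble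
  have key := moments p f hp (n := n) hn
  simp_rw [hP]
  calc (∑ z : Fin n → X × A × R,
          (∏ k, D (z k).1 * (mu (z k).1 (z k).2.1 * Dr (z k).1 (z k).2.1 (z k).2.2)) *
          ((n : ℝ)⁻¹ * ∑ k, Vhat (z k).1 (z k).2.1 (z k).2.2)^2)
      - (∑ z : Fin n → X × A × R,
          (∏ k, D (z k).1 * (mu (z k).1 (z k).2.1 * Dr (z k).1 (z k).2.1 (z k).2.2)) *
          ((n : ℝ)⁻¹ * ∑ k, Vhat (z k).1 (z k).2.1 (z k).2.2))^2
      = (n : ℝ)⁻¹ * ((∑ s : X × A × R, p s * (f s)^2) - (∑ s : X × A × R, p s * f s)^2) := key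
    _ = _ := by
      rw [hμ1, hμ2]
      congr 1
      simp_rw [mul_add]
      rw [Finset.sum_add_distrib, Finset.sum_add_distrib]
      ring
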